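/- Let A = [a_{ij}] be an n×n real matrix with a_{kk} ≠ 0 for some index k, and let B be the (n+1)×(n+1) matrix B = [[A − a_{kk} P_{kk}, e_k],[a_{kk} r_k(A − a_{kk} P_{kk}), a_{kk}]], where P_{kk} has 1 in entry (k,k) and zeros elsewhere, e_k is the k-th standard basis column vector, and r_k(·) is the k-th row. Then for every column index v ≤ n, det(B(n+1, v)) = (−1)^{n+k} det(A(k, v)). In particular, if det(A(k,v)) ≠ 0 then det(B(n+1,v)) ≠ 0. -/

import Mathlib

open Matrix

/-- The bordered matrix `B = [[A − a_kk P_kk, e_k],[a_kk r_k(A − a_kk P_kk), a_kk]]`. -/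
def borderEq {n : ℕ} (A : Matrix (Fin (n+1)) (Fin (n+1)) ℝ) (k : Fin (n+1)) :
    Matrix (Fin (n+2)) (Fin (n+2)) ℝ :=
  Matrix.of fun i j =>
    Fin.lastCases
      (Fin.lastCases (A k k)
        (fun j' => A k k * (A - Matrix.single k k (A k k)) k j') j)
      (fun i' => Fin.lastCases (if i' = k then 1 else 0)
        (fun j' => (A - Matrix.single k k (A k k)) i' j') j)
      i

theorem statement8 {n : ℕ} (A : Matrix (Fin (n+1)) (Fin (n+1)) ℝ) (k : Fin (n+1))
    (hkk : A k k ≠ 0) (v : Fin (n+1)) :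
    ((borderEq A k).submatrix (Fin.last (n+1)).succAbove (v.castSucc).succAbove).det
        = (-1 : ℝ) ^ ((n + 1) + ((k : ℕ) + 1)) *
          (A.submatrix k.succAbove v.succAbove).det ∧
      ((A.submatrix k.succAbove v.succAbove).det ≠ 0 →
        ((borderEq A k).submatrix (Fin.last (n+1)).succAbove (v.castSucc).succAbove).det ≠ 0) := by
  set M := (borderEq A k).submatrix (Fin.last (n+1)).succAbove (v.castSucc).succAbove with hMdef
  -- last column of M
  have hcol : ∀ i : Fin (n+1), M i (Fin.last n) = if i = k then 1 else 0 := by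
    intro i
    have h1 : (v.castSucc).succAbove (Fin.last n) = Fin.last (n+1) := by
      rw [Fin.succAbove_of_le_castSucc]
      · exact Fin.succ_last n
      · exact Fin.le_castSucc_iff.mpr (by simp [Fin.lt_iff_val_lt_val, Fin.is_lt]; have := v.is_lt; omega)
    simp [hMdef, borderEq, h1, Fin.succAbove_last]
  -- minor at (k, last) equals the A-submatrix
  have hminor : M.submatrix k.succAbove (Fin.last n).succAbove
      = A.submatrix k.succAbove v.succAbove := by
    ext i j
    have hne : k.succAbove i ≠ k := Fin.succAbove_ne k i
    simp [hMdef, borderEq, Fin.succAbove_last, Fin.castSucc_succAbove_castSucc,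
      Matrix.single, hne, hne.symm]
  have hdet : M.det = (-1 : ℝ) ^ ((k : ℕ) + n) * (A.submatrix k.succAbove v.succAbove).det := by
    rw [Matrix.det_succ_column M (Fin.last n)]
    rw [Finset.sum_eq_single k]
    · rw [hcol k, hminor]; simp [Fin.val_last]
    · intro b _ hb
      rw [hcol b]; simp [hb]
    · simp
  have hsign : ((-1 : ℝ)) ^ ((k : ℕ) + n) = (-1 : ℝ) ^ ((n + 1) + ((k : ℕ) + 1)) := by
    calc ((-1:ℝ)) ^ ((k : ℕ) + n) = ((-1:ℝ)) ^ ((k : ℕ) + n) * (-1) ^ 2 := by norm_num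
      _ = (-1) ^ (((k : ℕ) + n) + 2) := (pow_add _ _ _).symm
      _ = _ := by rw [show ((k : ℕ) + n) + 2 = (n + 1) + ((k : ℕ) + 1) by ring]
  constructor
  · rw [hdet, hsign]
  · intro h
    rw [hdet, hsign]
    intro hc
    apply h
    have : ((-1 : ℝ)) ^ ((n + 1) + ((k : ℕ) + 1)) ≠ 0 := by positivity
    exact (mul_eq_zero.mp hc).resolve_left this
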